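/- For fixed $\ell \in \mathbb{N}$ and any compact interval $I$, as $n \to \infty$: $\frac{d^{\ell}}{dy^{\ell}} \left(1 - \frac{y^2}{n}\right)^n = (-1)^{\ell} H_{\ell}(y)\, e^{-y^2} + O(1/n)$ uniformly for $y \in I$, where $H_\ell$ is the physicists' Hermite polynomial. -/

import Mathlib

open Complex Metric

/-- Derivative of an entire function is entire. -/
lemma entire_deriv {h : ℂ → ℂ} (hd : Differentiable ℂ h) : Differentiable ℂ (deriv h) := by
  have := (hd.contDiff (n := (2 : ℕ))).differentiable_iteratedDeriv 1 (by norm_num)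
  rwa [iteratedDeriv_one] at this

/-- Entire functions have differentiable iterated derivatives. -/
lemma entire_iteratedDeriv {h : ℂ → ℂ} (hd : Differentiable ℂ h) (m : ℕ) :
    Differentiable ℂ (iteratedDeriv m h) := by
  induction m generalizing h with
  | zero => simpa using hd
  | succ m ih =>
    rw [iteratedDeriv_succ']
    exact ih (entire_deriv hd)

/-- Cauchy estimate with unit steps: if an entire function is bounded by `C` on the closed
ball of radius `m` around `c`, then its `m`-th derivative at `c` is bounded by `C`. -/
lemma entire_cauchy {h : ℂ → ℂ} (hd : Differentiable ℂ h) :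
    ∀ (m : ℕ) (c : ℂ) (C : ℝ), (∀ z ∈ closedBall c (m : ℝ), ‖h z‖ ≤ C) →
      ‖iteratedDeriv m h c‖ ≤ C := by
  intro m
  induction m generalizing h with
  | zero =>
    intro c C hb
    simpa using hb c (mem_closedBall_self (by norm_num))
  | succ m ih =>
    intro c C hb
    rw [iteratedDeriv_succ']
    refine ih (entire_deriv hd) c C ?_
    intro z hz
    have key := Complex.norm_deriv_le_of_forall_mem_sphere_norm_le (c := z) (R := 1) (C := C)
      one_pos hd.diffContOnCl ?_
    · simpa using key
    · intro w hw
      refine hb w ?_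
      rw [mem_closedBall] at hz ⊢
      rw [mem_sphere] at hw
      have : dist w c ≤ dist w z + dist z c := dist_triangle _ _ _
      push_cast
      linarith

/-- Bridge between real and complex iterated derivatives for entire functions. -/
lemma iteratedDeriv_re_comp {F : ℂ → ℂ} (hF : Differentiable ℂ F) (m : ℕ) (y : ℝ) :
    iteratedDeriv m (fun t : ℝ => (F t).re) y = (iteratedDeriv m F y).re := by
  induction m generalizing y with
  | zero => simp
  | succ m ih =>
    rw [iteratedDeriv_succ, iteratedDeriv_succ]
    have hfun : iteratedDeriv m (fun t : ℝ => (F t).re) = fun t : ℝ => (iteratedDeriv m F t).re :=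
      funext fun t => ih t
    rw [hfun]
    have hd : Differentiable ℂ (iteratedDeriv m F) := entire_iteratedDeriv hF m
    have h1 : HasDerivAt (iteratedDeriv m F) (deriv (iteratedDeriv m F) ↑y) ↑y :=
      (hd ↑y).hasDerivAt
    exact h1.real_of_complex.deriv

/-- Crude bound on `(1 - z²/n)ⁿ`. -/

lemma norm_nat_cast_complex (n : ℕ) : ‖(n : ℂ)‖ = (n : ℝ) := by
  rw [Complex.norm_natCast]

/-- Crude bound on `(1 - z²/n)ⁿ`. -/
lemma crude_pow_bound {z : ℂ} {M : ℝ} (hM : ‖z‖ ^ 2 ≤ M) {n : ℕ} (hn : 1 ≤ n) :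
    ‖(1 - z ^ 2 / (n : ℂ)) ^ n‖ ≤ Real.exp M := by
  have hn0 : (0 : ℝ) < n := by exact_mod_cast hn
  have h1 : ‖1 - z ^ 2 / (n : ℂ)‖ ≤ 1 + M / n := by
    calc ‖1 - z ^ 2 / (n : ℂ)‖ ≤ ‖(1 : ℂ)‖ + ‖z ^ 2 / (n : ℂ)‖ := norm_sub_le _ _
    _ ≤ 1 + M / n := by
        rw [norm_one, norm_div, norm_pow, norm_nat_cast_complex]
        have : ‖z‖ ^ 2 / (n : ℝ) ≤ M / n := by gcongr
        linarith
  have h2 : (1 : ℝ) + M / n ≤ Real.exp (M / n) := by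
    have := Real.add_one_le_exp (M / n)
    linarith
  calc ‖(1 - z ^ 2 / (n : ℂ)) ^ n‖ = ‖1 - z ^ 2 / (n : ℂ)‖ ^ n := norm_pow _ _
  _ ≤ Real.exp (M / n) ^ n := pow_le_pow_left₀ (norm_nonneg _) (h1.trans h2) n
  _ = Real.exp (n * (M / n)) := by rw [Real.exp_nat_mul]
  _ = Real.exp M := by rw [mul_div_cancel₀ _ hn0.ne']

/-- Crude bound on `exp(-z²)`. -/
lemma crude_exp_bound {z : ℂ} {M : ℝ} (hM : ‖z‖ ^ 2 ≤ M) :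
    ‖Complex.exp (-z ^ 2)‖ ≤ Real.exp M := by
  rw [Complex.norm_exp]
  apply Real.exp_le_exp.2
  calc (-z ^ 2).re ≤ |(-z ^ 2).re| := le_abs_self _
  _ ≤ ‖-z ^ 2‖ := Complex.abs_re_le_norm _
  _ = ‖z‖ ^ 2 := by rw [norm_neg, norm_pow]
  _ ≤ M := hM

/-- The key pointwise estimate for `n ≥ M`. -/
lemma key_pointwise {z : ℂ} {M : ℝ} (hM : ‖z‖ ^ 2 ≤ M) (hM1 : 1 ≤ M) {n : ℕ}
    (hn : M ≤ n) :
    ‖(1 - z ^ 2 / (n : ℂ)) ^ n - Complex.exp (-z ^ 2)‖ ≤ Real.exp M * M ^ 2 / n := by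
  have hn1 : 1 ≤ n := by exact_mod_cast hM1.trans hn
  have hn0 : (0 : ℝ) < n := by exact_mod_cast hn1
  have hM0 : (0 : ℝ) < M := by linarith
  set w : ℂ := z ^ 2 / (n : ℂ) with hw
  have hwn : ‖w‖ ≤ M / n := by
    rw [hw, norm_div, norm_pow, norm_nat_cast_complex]
    gcongr
  have hw1 : ‖w‖ ≤ 1 := hwn.trans (by rw [div_le_one hn0]; exact hn)
  set a : ℂ := 1 - w with ha
  set b : ℂ := Complex.exp (-w) with hb
  -- exp(-z²) = b^n
  have hbn : Complex.exp (-z ^ 2) = b ^ n := by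
    rw [hb, ← Complex.exp_nat_mul]
    congr 1
    have hne : (n : ℂ) ≠ 0 := Nat.cast_ne_zero.2 (by omega)
    rw [hw, mul_neg, mul_div_cancel₀ _ hne]
  -- norms of a and b
  have hna : ‖a‖ ≤ Real.exp (M / n) := by
    have h3 : ‖a‖ ≤ 1 + M / n := by
      calc ‖a‖ ≤ ‖(1 : ℂ)‖ + ‖w‖ := norm_sub_le _ _
      _ ≤ 1 + M / n := by rw [norm_one]; linarith
    have h2 := Real.add_one_le_exp (M / n)
    linarith
  have hnb : ‖b‖ ≤ Real.exp (M / n) := by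
    rw [hb, Complex.norm_exp]
    apply Real.exp_le_exp.2
    calc (-w).re ≤ |(-w).re| := le_abs_self _
    _ ≤ ‖-w‖ := Complex.abs_re_le_norm _
    _ = ‖w‖ := by rw [norm_neg]
    _ ≤ M / n := hwn
  -- |a - b| ≤ (M/n)^2
  have hab : ‖a - b‖ ≤ (M / n) ^ 2 := by
    have hbound := Complex.exp_bound (x := -w) (by rwa [norm_neg])
      (n := 2) (by norm_num)
    have hsum : (∑ m ∈ Finset.range 2, (-w) ^ m / (m.factorial : ℂ)) = a := by
      simp [Finset.sum_range_succ, ha, sub_eq_add_neg]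
    rw [hsum, norm_neg] at hbound
    have h34 : ((2 + 1 : ℕ) : ℝ) * (((2 : ℕ).factorial : ℝ) * (2 : ℕ) : ℝ)⁻¹ ≤ 1 := by
      norm_num [Nat.factorial]
    have h4 : ‖a - b‖ ≤ ‖w‖ ^ 2 := by
      rw [norm_sub_rev, hb]
      calc ‖Complex.exp (-w) - a‖ ≤ ‖w‖ ^ 2 * (((2:ℕ) + 1 : ℕ) * (((2:ℕ).factorial : ℝ) * (2:ℕ))⁻¹) := by
            exact_mod_cast hbound
      _ ≤ ‖w‖ ^ 2 * 1 := by
          apply mul_le_mul_of_nonneg_left _ (by positivity)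
          exact_mod_cast h34
      _ = ‖w‖ ^ 2 := mul_one _
    calc ‖a - b‖ ≤ ‖w‖ ^ 2 := h4
    _ ≤ (M / n) ^ 2 := pow_le_pow_left₀ (norm_nonneg _) hwn 2
  -- telescoping
  have hgeom : (∑ i ∈ Finset.range n, a ^ i * b ^ (n - 1 - i)) * (a - b) = a ^ n - b ^ n :=
    geom_sum₂_mul a b n
  have hexp : Real.exp (M / n) ^ n = Real.exp M := by
    rw [← Real.exp_nat_mul, mul_div_cancel₀ _ hn0.ne']
  have hsumbound : ‖∑ i ∈ Finset.range n, a ^ i * b ^ (n - 1 - i)‖ ≤ n * Real.exp M := by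
    calc ‖∑ i ∈ Finset.range n, a ^ i * b ^ (n - 1 - i)‖
        ≤ ∑ i ∈ Finset.range n, ‖a ^ i * b ^ (n - 1 - i)‖ := norm_sum_le _ _
    _ ≤ ∑ _i ∈ Finset.range n, Real.exp M := by
        refine Finset.sum_le_sum fun i hi => ?_
        rw [norm_mul, norm_pow, norm_pow]
        calc ‖a‖ ^ i * ‖b‖ ^ (n - 1 - i)
            ≤ Real.exp (M / n) ^ i * Real.exp (M / n) ^ (n - 1 - i) :=
              mul_le_mul (pow_le_pow_left₀ (norm_nonneg _) hna i)
                (pow_le_pow_left₀ (norm_nonneg _) hnb _) (by positivity) (by positivity)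
        _ = Real.exp (M / n) ^ (i + (n - 1 - i)) := (pow_add _ _ _).symm
        _ ≤ Real.exp (M / n) ^ n := by
            apply pow_le_pow_right₀ (Real.one_le_exp (by positivity))
            rw [Finset.mem_range] at hi
            omega
        _ = Real.exp M := hexp
    _ = n * Real.exp M := by simp [mul_comm]
  calc ‖(1 - z ^ 2 / (n : ℂ)) ^ n - Complex.exp (-z ^ 2)‖
      = ‖a ^ n - b ^ n‖ := by rw [hbn, ha, hw]
  _ = ‖(∑ i ∈ Finset.range n, a ^ i * b ^ (n - 1 - i)) * (a - b)‖ := by rw [hgeom]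
  _ = ‖∑ i ∈ Finset.range n, a ^ i * b ^ (n - 1 - i)‖ * ‖a - b‖ := norm_mul _ _
  _ ≤ (n * Real.exp M) * (M / n) ^ 2 :=
      mul_le_mul hsumbound hab (norm_nonneg _) (by positivity)
  _ = Real.exp M * M ^ 2 / n := by field_simp

/-- The `ℓ`-th physicists' Hermite polynomial, defined by the Rodrigues formula
`H_ℓ(y) = (-1)^ℓ e^{y²} (d/dy)^ℓ e^{-y²}`. -/
noncomputable def physHermite (ℓ : ℕ) (y : ℝ) : ℝ :=
  (-1 : ℝ) ^ ℓ * Real.exp (y ^ 2) * iteratedDeriv ℓ (fun t : ℝ => Real.exp (-t ^ 2)) y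

/-- Uniformly on compact intervals,
`(d/dy)^ℓ (1 - y²/n)ⁿ = (-1)^ℓ H_ℓ(y) e^{-y²} + O(1/n)`. -/
theorem iteratedDeriv_tendsto_hermite (ℓ : ℕ) (A B : ℝ) :
    ∃ C : ℝ, ∀ n : ℕ, 1 ≤ n → ∀ y ∈ Set.Icc A B,
      |iteratedDeriv ℓ (fun t : ℝ => (1 - t ^ 2 / n) ^ n) y -
          (-1 : ℝ) ^ ℓ * physHermite ℓ y * Real.exp (-y ^ 2)| ≤ C / n := by
  classical
  set R : ℝ := max |A| |B| with hRdef
  have hR0 : (0 : ℝ) ≤ R := le_max_iff.2 (Or.inl (abs_nonneg A))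
  set M : ℝ := (R + ℓ + 1) ^ 2 with hMdef
  have hM1 : 1 ≤ M := by
    have h1 : (1 : ℝ) ≤ R + ℓ + 1 := by
      have h2 : (0 : ℝ) ≤ (ℓ : ℝ) := Nat.cast_nonneg ℓ
      linarith
    nlinarith
  set E : ℝ := Real.exp M with hEdef
  have hE0 : (0 : ℝ) < E := Real.exp_pos M
  refine ⟨2 * E * M + E * M ^ 2, ?_⟩
  intro n hn y hy
  have hn0 : (0 : ℝ) < n := by exact_mod_cast hn
  set Fc : ℂ → ℂ := fun z => (1 - z ^ 2 / (n : ℂ)) ^ n with hFc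
  set Gc : ℂ → ℂ := fun z => Complex.exp (-z ^ 2) with hGc
  have hFd : Differentiable ℂ Fc :=
    Differentiable.pow ((differentiable_const (1 : ℂ)).sub ((differentiable_pow 2).div_const _)) n
  have hGd : Differentiable ℂ Gc := Complex.differentiable_exp.comp (differentiable_pow 2).neg
  -- real functions are real parts of the complex ones
  have hFre : (fun t : ℝ => (1 - t ^ 2 / (n : ℝ)) ^ n) = fun t : ℝ => (Fc ↑t).re := by
    funext t
    have h : Fc (t : ℂ) = (((1 - t ^ 2 / (n : ℝ)) ^ n : ℝ) : ℂ) := by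
      rw [hFc]; push_cast; ring
    rw [h, Complex.ofReal_re]
  have hGre : (fun t : ℝ => Real.exp (-t ^ 2)) = fun t : ℝ => (Gc ↑t).re := by
    funext t
    have h : Gc (t : ℂ) = ((Real.exp (-t ^ 2) : ℝ) : ℂ) := by
      rw [hGc, Complex.ofReal_exp]; push_cast; ring_nf
    rw [h, Complex.ofReal_re]
  have e1 : iteratedDeriv ℓ (fun t : ℝ => (1 - t ^ 2 / (n : ℝ)) ^ n) y
      = (iteratedDeriv ℓ Fc ↑y).re := by
    rw [hFre]; exact iteratedDeriv_re_comp hFd ℓ y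
  have e2 : iteratedDeriv ℓ (fun t : ℝ => Real.exp (-t ^ 2)) y
      = (iteratedDeriv ℓ Gc ↑y).re := by
    rw [hGre]; exact iteratedDeriv_re_comp hGd ℓ y
  -- the Hermite expression is just the iterated derivative of the Gaussian
  have e3 : (-1 : ℝ) ^ ℓ * physHermite ℓ y * Real.exp (-y ^ 2)
      = iteratedDeriv ℓ (fun t : ℝ => Real.exp (-t ^ 2)) y := by
    have hneg : (-1 : ℝ) ^ ℓ * (-1 : ℝ) ^ ℓ = 1 := by rw [← mul_pow]; norm_num
    have hexp : Real.exp (y ^ 2) * Real.exp (-y ^ 2) = 1 := by rw [← Real.exp_add]; simp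
    rw [physHermite]
    calc (-1 : ℝ) ^ ℓ * ((-1 : ℝ) ^ ℓ * Real.exp (y ^ 2)
          * iteratedDeriv ℓ (fun t : ℝ => Real.exp (-t ^ 2)) y) * Real.exp (-y ^ 2)
        = ((-1 : ℝ) ^ ℓ * (-1 : ℝ) ^ ℓ) * (Real.exp (y ^ 2) * Real.exp (-y ^ 2))
          * iteratedDeriv ℓ (fun t : ℝ => Real.exp (-t ^ 2)) y := by ring
    _ = iteratedDeriv ℓ (fun t : ℝ => Real.exp (-t ^ 2)) y := by rw [hneg, hexp]; ring
  -- iterated derivative of the difference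
  have hsub : iteratedDeriv ℓ (Fc - Gc) ↑y
      = iteratedDeriv ℓ Fc ↑y - iteratedDeriv ℓ Gc ↑y := by
    rw [← iteratedDerivWithin_univ, ← iteratedDerivWithin_univ, ← iteratedDerivWithin_univ]
    exact iteratedDerivWithin_sub (Set.mem_univ _) uniqueDiffOn_univ
      hFd.contDiff.contDiffWithinAt hGd.contDiff.contDiffWithinAt
  -- points of the ball are bounded
  have hball : ∀ z ∈ Metric.closedBall (y : ℂ) (ℓ : ℝ), ‖z‖ ^ 2 ≤ M := by
    intro z hz
    rw [Metric.mem_closedBall] at hz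
    have h1 : ‖z‖ ≤ R + ℓ + 1 := by
      have h2 : ‖z - ↑y‖ ≤ (ℓ : ℝ) := by rwa [← dist_eq_norm]
      have h3 : ‖(y : ℂ)‖ ≤ R := by
        rw [Complex.norm_real, Real.norm_eq_abs]
        rcases hy with ⟨hA, hB⟩
        refine abs_le.mpr ⟨?_, ?_⟩
        · have h4 := neg_abs_le A
          have h5 := le_max_left |A| |B|
          rw [hRdef]; linarith
        · have h4 := le_abs_self B
          have h5 := le_max_right |A| |B|
          rw [hRdef]; linarith
      calc ‖z‖ = ‖z - ↑y + ↑y‖ := by ring_nf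
      _ ≤ ‖z - ↑y‖ + ‖(y : ℂ)‖ := norm_add_le _ _
      _ ≤ (ℓ : ℝ) + R := add_le_add h2 h3
      _ ≤ R + ℓ + 1 := by linarith
    rw [hMdef]
    exact pow_le_pow_left₀ (norm_nonneg _) h1 2
  -- the Cauchy estimates
  have hHd : Differentiable ℂ (Fc - Gc) := hFd.sub hGd
  have key : ‖iteratedDeriv ℓ (Fc - Gc) ↑y‖ ≤ (2 * E * M + E * M ^ 2) / n := by
    rcases le_or_gt M n with hMn | hMn
    · have h1 : ‖iteratedDeriv ℓ (Fc - Gc) ↑y‖ ≤ E * M ^ 2 / n := by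
        apply entire_cauchy hHd ℓ (↑y) _
        intro z hz
        exact key_pointwise (hball z hz) hM1 hMn
      refine h1.trans ?_
      gcongr
      nlinarith [hE0.le, hM1]
    · have h1 : ‖iteratedDeriv ℓ (Fc - Gc) ↑y‖ ≤ 2 * E := by
        apply entire_cauchy hHd ℓ (↑y) _
        intro z hz
        have hz2 := hball z hz
        calc ‖(Fc - Gc) z‖ = ‖Fc z - Gc z‖ := rfl
        _ ≤ ‖Fc z‖ + ‖Gc z‖ := norm_sub_le _ _
        _ ≤ E + E := add_le_add (crude_pow_bound hz2 hn) (crude_exp_bound hz2)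
        _ = 2 * E := by ring
      refine h1.trans ?_
      rw [le_div_iff₀ hn0]
      nlinarith [hE0.le, hMn.le, sq_nonneg M]
  -- conclusion
  rw [e3, e1, e2, ← Complex.sub_re, ← hsub]
  calc |(iteratedDeriv ℓ (Fc - Gc) ↑y).re|
      ≤ ‖iteratedDeriv ℓ (Fc - Gc) ↑y‖ := Complex.abs_re_le_norm _
  _ ≤ (2 * E * M + E * M ^ 2) / n := key
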